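/- (Lemma sri-no-removed-samples) Fix the sequential subsampling with parameter s, and let P be a position. If no remaining sample lies in the interval [P − s, P − 1], then no original sample was removed between P − 1 and its preceding remaining sample. Precisely: if t_i < P − 1 < t_{i+1} are the surrounding remaining samples and t_i < P − s, then no original sample u_j with t_i < u_j < t_{i+1} was removed. -/

import Mathlib

/-- One step of the sequential subsampling: when processing candidate `u (k+1)`,
remove it iff the next original sample `u (k+2)` and the nearest remaining sample
to the left of `u (k+1)` are at distance ≤ s. -/
def subsampleStep (s : ℕ) (u : ℕ → ℕ) (k : ℕ) (S : Finset ℕ) : Finset ℕ :=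
  if u (k+2) - ((S.filter fun x => x < u (k+1)).max.getD 0) ≤ s
  then S.erase (u (k+1)) else S

/-- State after processing the first `k` candidates (candidates are u 1, u 2, …, in order). -/
def subsampleIter (s : ℕ) (u : ℕ → ℕ) (r : ℕ) : ℕ → Finset ℕ
  | 0 => (Finset.range r).image u
  | k+1 => subsampleStep s u k (subsampleIter s u r k)

/-- Remaining samples after the whole sequential subsampling process
(processing u 1, …, u (r−2), i.e. the 1-based samples u_2, …, u_{r−1}). -/
def subsample (s : ℕ) (u : ℕ → ℕ) (r : ℕ) : Finset ℕ :=
  subsampleIter s u r (r - 2)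

lemma subsampleStep_subset (s : ℕ) (u : ℕ → ℕ) (k : ℕ) (S : Finset ℕ) :
    subsampleStep s u k S ⊆ S := by
  unfold subsampleStep
  split
  · exact Finset.erase_subset _ _
  · exact Finset.Subset.refl _

lemma subsampleIter_subset (s : ℕ) (u : ℕ → ℕ) (r k : ℕ) :
    subsampleIter s u r k ⊆ (Finset.range r).image u := by
  induction k with
  | zero => exact Finset.Subset.refl _
  | succ k ih => exact (subsampleStep_subset s u k _).trans ih

/-- Unprocessed samples (and `u 0`) are still present after `k` steps. -/
lemma mem_subsampleIter_of_unprocessed (s : ℕ) (u : ℕ → ℕ) (r : ℕ)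
    (hmono : StrictMonoOn u (Set.Iio r)) :
    ∀ k, k ≤ r - 2 → ∀ j < r, (j = 0 ∨ k < j) → u j ∈ subsampleIter s u r k := by
  intro k
  induction k with
  | zero =>
    intro _ j hj _
    exact Finset.mem_image_of_mem u (Finset.mem_range.mpr hj)
  | succ k ih =>
    intro hk j hj hj0
    have hkr : k + 3 ≤ r := by omega
    have hmem : u j ∈ subsampleIter s u r k := by
      apply ih (by omega) j hj
      omega
    show u j ∈ subsampleStep s u k _
    unfold subsampleStep
    split
    · apply Finset.mem_erase.mpr ⟨?_, hmem⟩
      rcases hj0 with h0 | hlt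
      · subst h0
        exact ne_of_lt (hmono (by simp; omega) (by simp; omega) (by omega))
      · exact ne_of_gt (hmono (by simp; omega) (Set.mem_Iio.mpr hj) (by omega))
    · exact hmem

/-- Invariant: every removed sample lies strictly between two remaining samples
at distance at most `s`. -/
lemma subsampleIter_removed (s : ℕ) (u : ℕ → ℕ) (r : ℕ)
    (hmono : StrictMonoOn u (Set.Iio r)) :
    ∀ k, k ≤ r - 2 → ∀ x ∈ (Finset.range r).image u, x ∉ subsampleIter s u r k →
      ∃ t₁ ∈ subsampleIter s u r k, ∃ t₂ ∈ subsampleIter s u r k,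
        t₁ < x ∧ x < t₂ ∧ t₂ - t₁ ≤ s := by
  intro k
  induction k with
  | zero => intro _ x hx hx'; exact absurd hx hx'
  | succ k ih =>
    intro hk x hx hx'
    have hkr : k + 3 ≤ r := by omega
    set S := subsampleIter s u r k with hS
    have hstep : subsampleIter s u r (k+1) = subsampleStep s u k S := rfl
    rw [hstep] at hx' ⊢
    unfold subsampleStep at hx' ⊢
    -- the candidate
    set y := u (k+1) with hy
    -- u 0 is in S and below y
    have hu0 : u 0 ∈ S := mem_subsampleIter_of_unprocessed s u r hmono k (by omega) 0 (by omega) (Or.inl rfl)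
    have hu0y : u 0 < y := hmono (by simp; omega) (by simp; omega) (by omega)
    have hnext : u (k+2) ∈ S := mem_subsampleIter_of_unprocessed s u r hmono k (by omega) (k+2) (by omega) (Or.inr (by omega))
    have hynext : y < u (k+2) := hmono (by simp; omega) (by simp; omega) (by omega)
    by_cases hcond : u (k+2) - ((S.filter fun z => z < y).max.getD 0) ≤ s
    · -- erase happens
      rw [if_pos hcond] at hx' ⊢
      -- identify m
      have hne : (S.filter fun z => z < y).Nonempty := ⟨u 0, Finset.mem_filter.mpr ⟨hu0, hu0y⟩⟩
      obtain ⟨m, hmax⟩ := Finset.max_of_nonempty hne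
      have hmmem' : m ∈ S.filter fun z => z < y := Finset.mem_of_max hmax
      have hmS : m ∈ S := (Finset.mem_filter.mp hmmem').1
      have hmy : m < y := (Finset.mem_filter.mp hmmem').2
      rw [hmax] at hcond
      have hcond2 : u (k + 2) - m ≤ s := hcond
      by_cases hxS : x ∈ S
      · -- x was removed at this step: x = y
        have hxy : x = y := by
          by_contra hne'
          exact hx' (Finset.mem_erase.mpr ⟨hne', hxS⟩)
        refine ⟨m, Finset.mem_erase.mpr ⟨ne_of_lt hmy, hmS⟩,
          u (k+2), Finset.mem_erase.mpr ⟨ne_of_gt hynext, hnext⟩, ?_, ?_, hcond2⟩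
        · omega
        · omega
      · -- x was removed earlier
        obtain ⟨t₁, ht₁, t₂, ht₂, h1, h2, h3⟩ := ih (by omega) x hx hxS
        -- x < y
        have hxlt : x < y := by
          obtain ⟨i, hi, hui⟩ := Finset.mem_image.mp hx
          rw [Finset.mem_range] at hi
          rcases Nat.lt_or_ge k i with h | h
          · exact absurd (mem_subsampleIter_of_unprocessed s u r hmono k (by omega) i hi (Or.inr h)) (hui ▸ hxS)
          · subst hui
            exact hmono (by simp; omega) (by simp; omega) (by omega)
        have ht₁y : t₁ ≠ y := by omega
        by_cases ht₂y : t₂ = y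
        · -- the right witness is being erased; patch using m and u (k+2)
          have ht₁m : t₁ ≤ m := by
            have ht₁f : t₁ ∈ S.filter fun z => z < y := Finset.mem_filter.mpr ⟨ht₁, by omega⟩
            have h := Finset.le_max ht₁f
            rw [hmax] at h
            exact_mod_cast h
          rcases Nat.lt_or_ge m x with hmx | hxm
          · exact ⟨m, Finset.mem_erase.mpr ⟨ne_of_lt hmy, hmS⟩,
              u (k+2), Finset.mem_erase.mpr ⟨ne_of_gt hynext, hnext⟩, hmx, by omega, hcond2⟩
          · have hxm' : x < m := lt_of_le_of_ne hxm (fun h => hxS (h ▸ hmS))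
            exact ⟨t₁, Finset.mem_erase.mpr ⟨ht₁y, ht₁⟩,
              m, Finset.mem_erase.mpr ⟨ne_of_lt hmy, hmS⟩, h1, hxm', by omega⟩
        · exact ⟨t₁, Finset.mem_erase.mpr ⟨ht₁y, ht₁⟩,
            t₂, Finset.mem_erase.mpr ⟨ht₂y, ht₂⟩, h1, h2, h3⟩
    · rw [if_neg hcond] at hx' ⊢
      exact ih (by omega) x hx hx'

/-- Lemma sri-no-removed-samples: if a < P−1 < b are the remaining
samples surrounding position P−1 and a < P − s (no remaining sample in [P−s, P−1]),
then no original sample strictly between a and b was removed. -/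
theorem subsample_no_removed (n r s : ℕ) (u : ℕ → ℕ)
    (hs : 1 ≤ s) (hmono : StrictMonoOn u (Set.Iio r))
    (hbounds : ∀ i < r, 1 ≤ u i ∧ u i ≤ n)
    (P : ℕ) (hP : 1 ≤ P)
    (a b : ℕ) (ha : a ∈ subsample s u r) (hb : b ∈ subsample s u r)
    (haP : a < P - 1) (hPb : P - 1 < b)
    (hcons : ∀ x ∈ subsample s u r, x ≤ a ∨ b ≤ x)
    (hfar : a + s < P) :
    ∀ j < r, a < u j → u j < b → u j ∈ subsample s u r := by
  intro j hj hau hub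
  by_contra hnot
  have hximg : u j ∈ (Finset.range r).image u :=
    Finset.mem_image_of_mem u (Finset.mem_range.mpr hj)
  obtain ⟨t₁, ht₁, t₂, ht₂, h1, h2, h3⟩ :=
    subsampleIter_removed s u r hmono (r - 2) (le_refl _) (u j) hximg hnot
  have hc₁ := hcons t₁ ht₁
  have hc₂ := hcons t₂ ht₂
  omega
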